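/- In the numbers game on a connected GCM graph (Γ, M) with n ≥ 1 nodes played from a nonzero dominant position λ (all λ_i ≥ 0, some λ_i > 0), any terminating game sequence fires every node of Γ at least once. -/

import Mathlib

/-- A generalized Cartan matrix. -/
def IsGCM {n : ℕ} (M : Matrix (Fin n) (Fin n) ℤ) : Prop :=
  (∀ i, M i i = 2) ∧ (∀ i j, i ≠ j → M i j ≤ 0) ∧
    (∀ i j, i ≠ j → (M i j = 0 ↔ M j i = 0))

/-- Firing node `i` from position `lam`. -/
def fireZ {n : ℕ} (M : Matrix (Fin n) (Fin n) ℤ) (i : Fin n) (lam : Fin n → ℝ) :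
    Fin n → ℝ :=
  fun j => lam j - (M i j : ℝ) * lam i

/-- Legality of a firing sequence. -/
def legalSeq {n : ℕ} (M : Matrix (Fin n) (Fin n) ℤ) :
    (Fin n → ℝ) → List (Fin n) → Prop
  | _, [] => True
  | lam, i :: s => 0 < lam i ∧ legalSeq M (fireZ M i lam) s

/-- Resulting position of a firing sequence. -/
def playSeq {n : ℕ} (M : Matrix (Fin n) (Fin n) ℤ) :
    (Fin n → ℝ) → List (Fin n) → (Fin n → ℝ)
  | lam, [] => lam
  | lam, i :: s => playSeq M (fireZ M i lam) s

lemma mono15 {n : ℕ} (M : Matrix (Fin n) (Fin n) ℤ) (hM : IsGCM M) :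
    ∀ (s : List (Fin n)) (lam : Fin n → ℝ), legalSeq M lam s →
      ∀ i, i ∉ s → lam i ≤ playSeq M lam s i := by
  intro s
  induction s with
  | nil => intro lam _ i _; simp [playSeq]
  | cons j t ih =>
    intro lam hleg i hi
    have hij : i ≠ j := fun h => hi (h ▸ List.mem_cons_self)
    have hit : i ∉ t := fun h => hi (List.mem_cons_of_mem _ h)
    have h1 : lam i ≤ fireZ M j lam i := by
      have hle : (M j i : ℝ) ≤ 0 := by
        exact_mod_cast hM.2.1 j i (Ne.symm hij)
      have := hleg.1
      simp only [fireZ]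
      nlinarith
    calc lam i ≤ fireZ M j lam i := h1
      _ ≤ playSeq M (fireZ M j lam) t i := ih _ hleg.2 i hit
      _ = playSeq M lam (j :: t) i := rfl

lemma strict15 {n : ℕ} (M : Matrix (Fin n) (Fin n) ℤ) (hM : IsGCM M) :
    ∀ (s : List (Fin n)) (lam : Fin n → ℝ), legalSeq M lam s →
      ∀ i, i ∉ s → (∃ j ∈ s, M j i ≠ 0) → lam i < playSeq M lam s i := by
  intro s
  induction s with
  | nil => intro lam _ i _ h; simp at h
  | cons j t ih =>
    intro lam hleg i hi hex
    have hij : i ≠ j := fun h => hi (h ▸ List.mem_cons_self)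
    have hit : i ∉ t := fun h => hi (List.mem_cons_of_mem _ h)
    rcases hex with ⟨k, hk, hknz⟩
    rcases List.mem_cons.1 hk with rfl | hkt
    · have hlt : (M k i : ℝ) < 0 := by
        have := hM.2.1 k i (Ne.symm hij)
        exact_mod_cast lt_of_le_of_ne this (by exact_mod_cast hknz)
      have h1 : lam i < fireZ M k lam i := by
        have := hleg.1
        simp only [fireZ]; nlinarith
      calc lam i < fireZ M k lam i := h1
        _ ≤ playSeq M (fireZ M k lam) t i := mono15 M hM t _ hleg.2 i hit
        _ = playSeq M lam (k :: t) i := rfl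
    · have h1 : lam i ≤ fireZ M j lam i := by
        have hle : (M j i : ℝ) ≤ 0 := by
          exact_mod_cast hM.2.1 j i (Ne.symm hij)
        have := hleg.1
        simp only [fireZ]; nlinarith
      calc lam i ≤ fireZ M j lam i := h1
        _ < playSeq M (fireZ M j lam) t i := ih _ hleg.2 i hit ⟨k, hkt, hknz⟩
        _ = playSeq M lam (j :: t) i := rfl

/-- In the numbers game on a connected GCM graph (nodes `i ≠ j` adjacent iff
`M i j ≠ 0`) with `n ≥ 1` nodes, played from a nonzero dominant position, any
terminating game sequence fires every node at least once. -/
theorem stmt15 {n : ℕ} (hn : 0 < n) (M : Matrix (Fin n) (Fin n) ℤ)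
    (hM : IsGCM M)
    (hconn : (SimpleGraph.fromRel (fun i j => M i j ≠ 0)).Connected)
    (lam : Fin n → ℝ) (hdom : ∀ i, 0 ≤ lam i) (hnz : ∃ i, 0 < lam i)
    (s : List (Fin n)) (hleg : legalSeq M lam s)
    (hterm : ∀ j, playSeq M lam s j ≤ 0) :
    ∀ i, i ∈ s := by
  by_contra h
  push_neg at h
  rcases h with ⟨i, hi⟩
  have step : ∀ a b, (SimpleGraph.fromRel (fun i j => M i j ≠ 0)).Adj a b →
      a ∉ s → b ∉ s := by
    intro a b hab ha hb
    rw [SimpleGraph.fromRel_adj] at hab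
    rcases hab with ⟨hne, hor⟩
    have hba : M b a ≠ 0 := by
      rcases hor with h | h
      · exact fun h0 => h ((hM.2.2 b a hne.symm).1 h0)
      · exact h
    have := strict15 M hM s lam hleg a ha ⟨b, hb, hba⟩
    have := hterm a
    have := hdom a
    linarith
  have walklem : ∀ (a k : Fin n),
      (SimpleGraph.fromRel (fun i j => M i j ≠ 0)).Walk a k → a ∉ s → k ∉ s := by
    intro a k w
    induction w with
    | nil => exact id
    | cons hab _ ihw => exact fun ha => ihw (step _ _ hab ha)
  have key : ∀ k, k ∉ s := fun k =>
    walklem i k (hconn.preconnected i k).some hi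
  rcases hnz with ⟨j, hj⟩
  have := mono15 M hM s lam hleg j (key j)
  linarith [hterm j]
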